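/- For every integer n ≥ 1 and every graph G of order n, D_0(G) ≥ log* n − log* log* n − 1 (equivalently, D_0(G) + log* log* n + 1 ≥ log* n); hence the succinctness function q_0(n) = min{D_0(G) : G has order n} satisfies q_0(n) ≥ log* n − log* log* n − 1 for all n. -/

import Mathlib

namespace PaperFO

/-- First-order formulas in a language with equality `eq` and one binary
relation symbol `rel` (adjacency `~` for graphs, the arc relation `↦` for
digraphs).  Variables are indexed by natural numbers (variable `xᵢ` of the
paper corresponds to `i - 1 : ℕ`). -/
inductive Fml : Type
  | eq : ℕ → ℕ → Fml
  | rel : ℕ → ℕ → Fml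
  | not : Fml → Fml
  | and : Fml → Fml → Fml
  | or : Fml → Fml → Fml
  | all : ℕ → Fml → Fml
  | ex : ℕ → Fml → Fml

namespace Fml

/-- Truth of a formula in the structure `(V, r)` under the assignment `σ`. -/
def eval {V : Type} (r : V → V → Prop) (σ : ℕ → V) : Fml → Prop
  | eq i j => σ i = σ j
  | rel i j => r (σ i) (σ j)
  | not φ => ¬ eval r σ φ
  | and φ ψ => eval r σ φ ∧ eval r σ ψ
  | or φ ψ => eval r σ φ ∨ eval r σ ψ
  | all i φ => ∀ v : V, eval r (Function.update σ i v) φ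
  | ex i φ => ∃ v : V, eval r (Function.update σ i v) φ

/-- The free variables of a formula. -/
def freeVars : Fml → Finset ℕ
  | eq i j => {i, j}
  | rel i j => {i, j}
  | not φ => freeVars φ
  | and φ ψ => freeVars φ ∪ freeVars ψ
  | or φ ψ => freeVars φ ∪ freeVars ψ
  | all i φ => (freeVars φ).erase i
  | ex i φ => (freeVars φ).erase i

/-- A sentence is a formula without free variables. -/
def IsSentence (φ : Fml) : Prop := φ.freeVars = ∅

/-- The quantifier depth (= quantifier rank) of a formula: the maximum
number of nested quantifiers. -/
def depth : Fml → ℕ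
  | eq _ _ => 0
  | rel _ _ => 0
  | not φ => depth φ
  | and φ ψ => max (depth φ) (depth ψ)
  | or φ ψ => max (depth φ) (depth ψ)
  | all _ φ => depth φ + 1
  | ex _ φ => depth φ + 1

/-- A formula is atomic if it is of the form `x = y` or `x ~ y`. -/
def IsAtomic : Fml → Prop
  | eq _ _ => True
  | rel _ _ => True
  | _ => False

/-- Negations occur only in front of atomic subformulas. -/
def NegAtomic : Fml → Prop
  | eq _ _ => True
  | rel _ _ => True
  | not φ => IsAtomic φ
  | and φ ψ => NegAtomic φ ∧ NegAtomic ψ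
  | or φ ψ => NegAtomic φ ∧ NegAtomic ψ
  | all _ φ => NegAtomic φ
  | ex _ φ => NegAtomic φ

/-- The set of maximal sequences of nested quantifiers of a formula,
recorded as lists of Booleans read from the outermost quantifier inwards
(`true` = `∃`, `false` = `∀`).  Every sequence of nested quantifiers of the
formula is a (contiguous) subsequence of one of these. -/
def qstrings : Fml → Set (List Bool)
  | eq _ _ => {[]}
  | rel _ _ => {[]}
  | not φ => qstrings φ
  | and φ ψ => qstrings φ ∪ qstrings ψ
  | or φ ψ => qstrings φ ∪ qstrings ψ
  | all _ φ => (List.cons false) '' qstrings φ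
  | ex _ φ => (List.cons true) '' qstrings φ

end Fml

/-- The number of quantifier alternations (occurrences of `∀∃` or `∃∀`) in a
sequence of nested quantifiers. -/
def altCount : List Bool → ℕ
  | [] => 0
  | [_] => 0
  | a :: b :: l => (if a = b then 0 else 1) + altCount (b :: l)

namespace Fml

/-- Every sequence of nested quantifiers has at most `a` quantifier
alternations. -/
def AltLe (φ : Fml) (a : ℕ) : Prop := ∀ s ∈ φ.qstrings, altCount s ≤ a

/-- An `a`-alternating formula: negations occur only in front of atomic
subformulas and every sequence of nested quantifiers has at most `a`
quantifier alternations. -/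
def AltFml (a : ℕ) (φ : Fml) : Prop := φ.NegAtomic ∧ φ.AltLe a

/-- A 0-alternating formula: negations occur only in front of atomic
subformulas and no sequence of nested quantifiers contains a quantifier
alternation. -/
def ZeroAlt (φ : Fml) : Prop := φ.NegAtomic ∧ φ.AltLe 0

end Fml

/-- `logStar n` is the minimum number of iterations of the binary logarithm
needed to bring `n` to `1` or below. -/
def logStar (n : ℕ) : ℕ :=
  if h : n ≤ 1 then 0 else logStar (Nat.log 2 n) + 1
decreasing_by exact Nat.log_lt_self 2 (by omega)

/-- The tower function: `tower 0 = 1`, `tower (i+1) = 2 ^ tower i`. -/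
def tower : ℕ → ℕ
  | 0 => 1
  | i + 1 => 2 ^ tower i

end PaperFO

namespace PaperFO

/-- A sentence is true on the graph `G` (graphs interpret `Fml.rel` as the
adjacency relation `~`). -/
def GModels {V : Type} (G : SimpleGraph V) (φ : Fml) : Prop :=
  ∀ σ : ℕ → V, φ.eval G.Adj σ

/-- The sentence `φ` defines the graph `G`: it is a sentence, it is true on
`G`, and it fails on every (finite, nonempty) graph not isomorphic to `G`. -/
def Defines {V : Type} (G : SimpleGraph V) (φ : Fml) : Prop :=
  φ.IsSentence ∧ GModels G φ ∧
    ∀ (W : Type) (_ : Fintype W) (_ : Nonempty W) (H : SimpleGraph W),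
      ¬ Nonempty (G ≃g H) → ¬ GModels H φ

end PaperFO

namespace PaperFO


-- ===== auxiliary development =====

def tow : ℕ → ℕ → ℕ
  | 0, b => b
  | k+1, b => 2 ^ tow k b

lemma tow_mono {k a b : ℕ} (h : a ≤ b) : tow k a ≤ tow k b := by
  induction k with
  | zero => exact h
  | succ k ih => exact Nat.pow_le_pow_right (by norm_num) ih

lemma le_tow (k b : ℕ) : b ≤ tow k b := by
  induction k with
  | zero => exact le_rfl
  | succ k ih => exact le_trans ih (Nat.le_of_lt Nat.lt_two_pow_self)

lemma tow_le_tow_k {k k' : ℕ} (b : ℕ) (h : k ≤ k') : tow k b ≤ tow k' b := by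
  induction h with
  | refl => exact le_rfl
  | step _ ih => exact le_trans ih (Nat.le_of_lt Nat.lt_two_pow_self)

lemma aux_pq (p q : ℕ) (hp : 1 ≤ p) (hq : 1 ≤ q) : p + q ≤ p * q + 1 := by
  obtain ⟨p', rfl⟩ := Nat.exists_eq_add_of_le hp
  obtain ⟨q', rfl⟩ := Nat.exists_eq_add_of_le hq
  nlinarith [Nat.zero_le (p' * q')]

lemma aux_pq2 (p q : ℕ) (hp : 2 ≤ p) (hq : 2 ≤ q) : p + q ≤ p * q := by
  obtain ⟨p', rfl⟩ := Nat.exists_eq_add_of_le hp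
  obtain ⟨q', rfl⟩ := Nat.exists_eq_add_of_le hq
  nlinarith [Nat.zero_le (p' * q')]

lemma two_pow_add_le (x c : ℕ) : 2 ^ x + c ≤ 2 ^ (x + c) := by
  have h1 : c + 1 ≤ 2 ^ c := Nat.lt_two_pow_self (n := c)
  have h2 : 1 ≤ 2 ^ x := Nat.one_le_two_pow
  have h3 : 2 ^ x + 2 ^ c ≤ 2 ^ x * 2 ^ c + 1 := aux_pq _ _ h2 (by omega)
  have h4 : 2 ^ x * 2 ^ c = 2 ^ (x + c) := (pow_add 2 x c).symm
  omega

lemma tow_add_le (k a c : ℕ) : tow k a + c ≤ tow k (a + c) := by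
  induction k with
  | zero => exact le_rfl
  | succ k ih =>
    calc 2 ^ tow k a + c ≤ 2 ^ (tow k a + c) := two_pow_add_le _ _
      _ ≤ 2 ^ (tow k (a + c)) := Nat.pow_le_pow_right (by norm_num) ih

lemma tow_cmul_le (k a c : ℕ) (hk : 1 ≤ k) : c * tow k a ≤ tow k (a + c) := by
  obtain ⟨m, rfl⟩ : ∃ m, k = m + 1 := ⟨k - 1, by omega⟩
  show c * 2 ^ tow m a ≤ 2 ^ tow m (a + c)
  calc c * 2 ^ tow m a ≤ 2 ^ c * 2 ^ tow m a :=
        Nat.mul_le_mul_right _ (Nat.le_of_lt (Nat.lt_two_pow_self (n := c)))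
    _ = 2 ^ (tow m a + c) := by rw [← pow_add]; ring_nf
    _ ≤ 2 ^ tow m (a + c) := Nat.pow_le_pow_right (by norm_num) (tow_add_le m a c)

lemma tow_add_tow_le (k a b : ℕ) (ha : 1 ≤ a) (hb : 1 ≤ b) :
    tow k a + tow k b ≤ tow k (a + b) := by
  induction k with
  | zero => exact le_rfl
  | succ k ih =>
    show 2 ^ tow k a + 2 ^ tow k b ≤ 2 ^ tow k (a + b)
    have h1 : 2 ≤ 2 ^ tow k a := by
      calc 2 = 2 ^ 1 := rfl
        _ ≤ _ := Nat.pow_le_pow_right (by norm_num) (le_trans ha (le_tow k a))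
    have h2 : 2 ≤ 2 ^ tow k b := by
      calc 2 = 2 ^ 1 := rfl
        _ ≤ _ := Nat.pow_le_pow_right (by norm_num) (le_trans hb (le_tow k b))
    calc 2 ^ tow k a + 2 ^ tow k b ≤ 2 ^ tow k a * 2 ^ tow k b := aux_pq2 _ _ h1 h2
      _ = 2 ^ (tow k a + tow k b) := (pow_add 2 _ _).symm
      _ ≤ 2 ^ tow k (a + b) := Nat.pow_le_pow_right (by norm_num) ih

lemma tow_mul_tow_le (k a b : ℕ) (hk : 1 ≤ k) (ha : 1 ≤ a) (hb : 1 ≤ b) :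
    tow k a * tow k b ≤ tow k (a + b) := by
  obtain ⟨m, rfl⟩ : ∃ m, k = m + 1 := ⟨k - 1, by omega⟩
  show 2 ^ tow m a * 2 ^ tow m b ≤ 2 ^ tow m (a + b)
  rw [← pow_add]
  exact Nat.pow_le_pow_right (by norm_num) (tow_add_tow_le m a b ha hb)

lemma tow_pow_le (k a c : ℕ) (hk : 2 ≤ k) (ha : 1 ≤ a) : (tow k a) ^ c ≤ tow k (a + c) := by
  obtain ⟨m, rfl⟩ : ∃ m, k = m + 1 := ⟨k - 1, by omega⟩
  show (2 ^ tow m a) ^ c ≤ 2 ^ tow m (a + c)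
  rw [← pow_mul]
  refine Nat.pow_le_pow_right (by norm_num) ?_
  calc tow m a * c = c * tow m a := by ring
    _ ≤ tow m (a + c) := tow_cmul_le m a c (by omega)

lemma tow_pos (k b : ℕ) (hb : 1 ≤ b) : 1 ≤ tow k b := le_trans hb (le_tow k b)

-- logStar lemmas
lemma logStar_le_one {n : ℕ} (h : n ≤ 1) : logStar n = 0 := by
  rw [logStar]; simp [h]

lemma logStar_gt_one {n : ℕ} (h : 1 < n) : logStar n = logStar (Nat.log 2 n) + 1 := by
  rw [logStar]; simp [Nat.not_le.mpr h]

lemma logStar_mono : ∀ {m n : ℕ}, m ≤ n → logStar m ≤ logStar n := by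
  intro m
  induction m using Nat.strong_induction_on with
  | _ m ih =>
    intro n h
    by_cases hm : m ≤ 1
    · rw [logStar_le_one hm]; exact Nat.zero_le _
    · rw [logStar_gt_one (by omega), logStar_gt_one (show 1 < n by omega)]
      exact Nat.succ_le_succ (ih _ (Nat.log_lt_self 2 (by omega)) (Nat.log_mono_right h))

lemma logStar_two_pow (m : ℕ) : logStar (2 ^ m) ≤ logStar m + 1 := by
  rcases Nat.eq_zero_or_pos m with rfl | hm
  · simp [logStar_le_one]
  · have h2 : 1 < 2 ^ m := by
      calc 1 < 2 ^ 1 := by norm_num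
        _ ≤ 2 ^ m := Nat.pow_le_pow_right (by norm_num) hm
    rw [logStar_gt_one h2, Nat.log_pow (by norm_num)]

lemma logStar_tow (k b : ℕ) : logStar (tow k b) ≤ k + logStar b := by
  induction k with
  | zero => simp [tow]
  | succ k ih =>
    calc logStar (2 ^ tow k b) ≤ logStar (tow k b) + 1 := logStar_two_pow _
      _ ≤ k + logStar b + 1 := by omega
      _ = (k + 1) + logStar b := by ring

lemma logStar_le_of_le_two_pow {x y : ℕ} (h : x ≤ 2 ^ y) : logStar x ≤ logStar y + 1 :=
  le_trans (logStar_mono h) (logStar_two_pow y)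

lemma logStar_three : logStar 3 = 1 := by
  have h : Nat.log 2 3 = 1 := Nat.log_eq_of_pow_le_of_lt_pow (by norm_num) (by norm_num)
  rw [logStar_gt_one (by norm_num), h, logStar_le_one (by norm_num)]

lemma logStar_four : logStar 4 = 2 := by
  have h : Nat.log 2 4 = 2 := by
    rw [show (4:ℕ) = 2 ^ 2 by norm_num, Nat.log_pow (by norm_num)]
  have h1 : Nat.log 2 2 = 1 := Nat.log_eq_of_pow_le_of_lt_pow (by norm_num) (by norm_num)
  rw [logStar_gt_one (by norm_num), h, logStar_gt_one (by norm_num), h1,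
    logStar_le_one (by norm_num)]

-- polynomial bounds
lemma aux12 (d : ℕ) : 12 * d + 30 ≤ 2 ^ (d + 5) := by
  induction d with
  | zero => norm_num
  | succ n ih =>
    have h : (12:ℕ) ≤ 2 ^ (n + 5) := by
      calc (12:ℕ) ≤ 32 := by norm_num
        _ = 2 ^ 5 := by norm_num
        _ ≤ 2 ^ (n + 5) := Nat.pow_le_pow_right (by norm_num) (by omega)
    calc 12 * (n + 1) + 30 = (12 * n + 30) + 12 := by ring
      _ ≤ 2 ^ (n + 5) + 2 ^ (n + 5) := by omega
      _ = 2 ^ (n + 5 + 1) := by ring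
      _ = 2 ^ (n + 1 + 5) := by ring_nf

lemma aux6' (m : ℕ) : 6 * (m+1) ^ 2 + 12 * (m+1) + 7 ≤ 2 ^ (m + 5) := by
  induction m with
  | zero => norm_num
  | succ n ih =>
    calc 6 * (n+1+1) ^ 2 + 12 * (n+1+1) + 7
        = (6 * (n+1) ^ 2 + 12 * (n+1) + 7) + (12 * n + 30) := by ring
      _ ≤ 2 ^ (n + 5) + 2 ^ (n + 5) := by
          have := aux12 n
          omega
      _ = 2 ^ (n + 6) := by ring
      _ = 2 ^ (n + 1 + 5) := by ring_nf

lemma aux6 (d : ℕ) : 6 * d ^ 2 + 12 * d + 7 ≤ 2 ^ (d + 4) := by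
  match d with
  | 0 => norm_num
  | (m+1) =>
    calc 6 * (m+1) ^ 2 + 12 * (m+1) + 7 ≤ 2 ^ (m + 5) := aux6' m
      _ = 2 ^ (m + 1 + 4) := by ring_nf

lemma bnd_poly (d : ℕ) : 2 * d ^ 3 + 3 * d ^ 2 + 2 * d ≤ 2 ^ (d + 4) := by
  induction d with
  | zero => norm_num
  | succ n ih =>
    calc 2 * (n+1) ^ 3 + 3 * (n+1) ^ 2 + 2 * (n+1)
        = (2 * n ^ 3 + 3 * n ^ 2 + 2 * n) + (6 * n ^ 2 + 12 * n + 7) := by ring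
      _ ≤ 2 ^ (n + 4) + 2 ^ (n + 4) := by
          have := aux6 n
          omega
      _ = 2 ^ (n + 5) := by ring
      _ = 2 ^ (n + 1 + 4) := by ring_nf

-- ============ new development ============
open Fml

/-- all quantifiers in every quantifier string are equal to `c`. -/
def ConstQ (c : Bool) (φ : Fml) : Prop := ∀ s ∈ φ.qstrings, ∀ b ∈ s, b = c

lemma qstrings_nonempty : ∀ φ : Fml, φ.qstrings.Nonempty := by
  intro φ
  induction φ with
  | eq i j => exact ⟨[], rfl⟩
  | rel i j => exact ⟨[], rfl⟩
  | not ψ ih => exact ih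
  | and ψ χ ih1 ih2 => exact ih1.mono (Set.subset_union_left)
  | or ψ χ ih1 ih2 => exact ih1.mono (Set.subset_union_left)
  | all i ψ ih => exact ih.image _
  | ex i ψ ih => exact ih.image _

lemma altCount_eq_zero : ∀ (s : List Bool) (a : Bool), altCount (a :: s) = 0 → ∀ b ∈ s, b = a := by
  intro s
  induction s with
  | nil => intro a h b hb; simp at hb
  | cons c t ih =>
    intro a h b hb
    have h' : (if a = c then 0 else 1) + altCount (c :: t) = 0 := h
    have hac : a = c := by
      by_contra hne
      simp [hne] at h'
    have h0 : altCount (c :: t) = 0 := by omega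
    rcases List.mem_cons.mp hb with rfl | hbt
    · exact hac.symm
    · exact (ih c h0 b hbt).trans hac.symm

lemma constQ_of_altLe_ex {i : ℕ} {ψ : Fml} (h : (Fml.ex i ψ).AltLe 0) :
    ConstQ true (Fml.ex i ψ) := by
  intro s hs b hb
  obtain ⟨s', hs', rfl⟩ := hs
  have h0 : altCount (true :: s') = 0 := Nat.le_zero.mp (h _ ⟨s', hs', rfl⟩)
  rcases List.mem_cons.mp hb with rfl | hbt
  · rfl
  · exact altCount_eq_zero s' true h0 b hbt

lemma constQ_of_altLe_all {i : ℕ} {ψ : Fml} (h : (Fml.all i ψ).AltLe 0) :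
    ConstQ false (Fml.all i ψ) := by
  intro s hs b hb
  obtain ⟨s', hs', rfl⟩ := hs
  have h0 : altCount (false :: s') = 0 := Nat.le_zero.mp (h _ ⟨s', hs', rfl⟩)
  rcases List.mem_cons.mp hb with rfl | hbt
  · rfl
  · exact altCount_eq_zero s' false h0 b hbt

lemma ConstQ.body_ex {c : Bool} {i : ℕ} {ψ : Fml} (h : ConstQ c (Fml.ex i ψ)) : ConstQ c ψ :=
  fun s hs b hb => h (true :: s) ⟨s, hs, rfl⟩ b (List.mem_cons_of_mem _ hb)

lemma ConstQ.body_all {c : Bool} {i : ℕ} {ψ : Fml} (h : ConstQ c (Fml.all i ψ)) : ConstQ c ψ :=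
  fun s hs b hb => h (false :: s) ⟨s, hs, rfl⟩ b (List.mem_cons_of_mem _ hb)

lemma ConstQ.not {c : Bool} {ψ : Fml} (h : ConstQ c (Fml.not ψ)) : ConstQ c ψ := h

lemma ConstQ.and_left {c : Bool} {ψ χ : Fml} (h : ConstQ c (Fml.and ψ χ)) : ConstQ c ψ :=
  fun s hs => h s (Or.inl hs)
lemma ConstQ.and_right {c : Bool} {ψ χ : Fml} (h : ConstQ c (Fml.and ψ χ)) : ConstQ c χ :=
  fun s hs => h s (Or.inr hs)
lemma ConstQ.or_left {c : Bool} {ψ χ : Fml} (h : ConstQ c (Fml.or ψ χ)) : ConstQ c ψ :=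
  fun s hs => h s (Or.inl hs)
lemma ConstQ.or_right {c : Bool} {ψ χ : Fml} (h : ConstQ c (Fml.or ψ χ)) : ConstQ c χ :=
  fun s hs => h s (Or.inr hs)

lemma ConstQ.no_all {i : ℕ} {ψ : Fml} (h : ConstQ true (Fml.all i ψ)) : False := by
  obtain ⟨s, hs⟩ := qstrings_nonempty ψ
  have := h (false :: s) ⟨s, hs, rfl⟩ false List.mem_cons_self
  simp at this

lemma ConstQ.no_ex {i : ℕ} {ψ : Fml} (h : ConstQ false (Fml.ex i ψ)) : False := by
  obtain ⟨s, hs⟩ := qstrings_nonempty ψ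
  have := h (true :: s) ⟨s, hs, rfl⟩ true List.mem_cons_self
  simp at this

lemma Fml.AltLe.zero_not {ψ : Fml} (h : (Fml.not ψ).AltLe 0) : ψ.AltLe 0 := h
lemma Fml.AltLe.zero_and_left {ψ χ : Fml} (h : (Fml.and ψ χ).AltLe 0) : ψ.AltLe 0 :=
  fun s hs => h s (Or.inl hs)
lemma Fml.AltLe.zero_and_right {ψ χ : Fml} (h : (Fml.and ψ χ).AltLe 0) : χ.AltLe 0 :=
  fun s hs => h s (Or.inr hs)
lemma Fml.AltLe.zero_or_left {ψ χ : Fml} (h : (Fml.or ψ χ).AltLe 0) : ψ.AltLe 0 :=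
  fun s hs => h s (Or.inl hs)
lemma Fml.AltLe.zero_or_right {ψ χ : Fml} (h : (Fml.or ψ χ).AltLe 0) : χ.AltLe 0 :=
  fun s hs => h s (Or.inr hs)

lemma freeVars_nonempty_of_depth_zero : ∀ φ : Fml, φ.depth = 0 → φ.freeVars.Nonempty := by
  intro φ
  induction φ with
  | eq i j => intro _; exact ⟨i, by simp [Fml.freeVars]⟩
  | rel i j => intro _; exact ⟨i, by simp [Fml.freeVars]⟩
  | not ψ ih => intro h; exact ih h
  | and ψ χ ih1 ih2 =>
    intro h
    have h1 : ψ.depth = 0 := by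
      have := Nat.le_max_left ψ.depth χ.depth
      simp [Fml.depth] at h; omega
    exact (ih1 h1).mono (Finset.subset_union_left)
  | or ψ χ ih1 ih2 =>
    intro h
    have h1 : ψ.depth = 0 := by
      have := Nat.le_max_left ψ.depth χ.depth
      simp [Fml.depth] at h; omega
    exact (ih1 h1).mono (Finset.subset_union_left)
  | all i ψ ih => intro h; simp [Fml.depth] at h
  | ex i ψ ih => intro h; simp [Fml.depth] at h

lemma one_le_depth_of_sentence {φ : Fml} (h : φ.IsSentence) : 1 ≤ φ.depth := by
  by_contra hc
  have h0 : φ.depth = 0 := by omega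
  obtain ⟨a, ha⟩ := freeVars_nonempty_of_depth_zero φ h0
  rw [h] at ha
  simp at ha

def Ft : ℕ → ℕ → Type
  | 0, l => Fin l → Fin l → Bool × Bool
  | k+1, l => Finset (Ft k (l+1))

instance Ft.decEq : ∀ k l, DecidableEq (Ft k l)
  | 0, l => inferInstanceAs (DecidableEq (Fin l → Fin l → Bool × Bool))
  | k+1, l =>
    have := Ft.decEq k (l+1)
    inferInstanceAs (DecidableEq (Finset (Ft k (l+1))))

instance Ft.fintype : ∀ k l, Fintype (Ft k l)
  | 0, l => inferInstanceAs (Fintype (Fin l → Fin l → Bool × Bool))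
  | k+1, l =>
    have := Ft.fintype k (l+1)
    inferInstanceAs (Fintype (Finset (Ft k (l+1))))

instance Ft.nonempty : ∀ k l, Nonempty (Ft k l)
  | 0, _ => ⟨fun _ _ => (true, true)⟩
  | k+1, l => ⟨(∅ : Finset (Ft k (l+1)))⟩

lemma Ft.card_zero (l : ℕ) : Fintype.card (Ft 0 l) = 2 ^ (2 * (l * l)) := by
  have h : Fintype.card (Ft 0 l) = Fintype.card (Fin l → Fin l → Bool × Bool) :=
    Fintype.card_congr (Equiv.cast rfl)
  rw [h]
  rw [Fintype.card_fun, Fintype.card_fun]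
  simp only [Fintype.card_prod, Fintype.card_bool, Fintype.card_fin]
  rw [show (2*2 : ℕ) = 2^2 by norm_num, ← pow_mul, ← pow_mul]

lemma Ft.card_succ (k l : ℕ) : Fintype.card (Ft (k+1) l) = 2 ^ Fintype.card (Ft k (l+1)) := by
  have h : Fintype.card (Ft (k+1) l) = Fintype.card (Finset (Ft k (l+1))) :=
    Fintype.card_congr (Equiv.cast rfl)
  rw [h, Fintype.card_finset]

lemma Ft.card_le : ∀ k l, Fintype.card (Ft k l) ≤ tow (k+1) (2 * ((k + l) * (k + l))) := by
  intro k
  induction k with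
  | zero =>
    intro l
    rw [Ft.card_zero]
    show 2 ^ (2 * (l * l)) ≤ 2 ^ tow 0 (2 * ((0 + l) * (0 + l)))
    refine Nat.pow_le_pow_right (by norm_num) ?_
    simp [tow]
  | succ k ih =>
    intro l
    rw [Ft.card_succ]
    show 2 ^ Fintype.card (Ft k (l+1)) ≤ 2 ^ tow (k+1) (2 * ((k + 1 + l) * (k + 1 + l)))
    refine Nat.pow_le_pow_right (by norm_num) ?_
    have := ih (l+1)
    have he : k + (l+1) = k + 1 + l := by omega
    rw [he] at this
    exact this

section Types

variable {V : Type} [Fintype V] [Nonempty V]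

attribute [local instance] Classical.propDecidable

/-- Unfolding helper for `Ft` at successor levels. -/
def Ft.fs {k l : ℕ} (t : Ft (k+1) l) : Finset (Ft k (l+1)) := t

/-- Unfolding helper for `Ft` at level zero. -/
def Ft.f0 {l : ℕ} (t : Ft 0 l) : Fin l → Fin l → Bool × Bool := t

/-- The `k`-deep extension type of a tuple. -/
noncomputable def tp (G : SimpleGraph V) : (k : ℕ) → {l : ℕ} → (Fin l → V) → Ft k l
  | 0, _, x => fun i j => (decide (x i = x j), decide (G.Adj (x i) (x j)))
  | k+1, l, x => (Finset.univ.image (fun v : V => tp G k (Fin.snoc x v)) : Finset (Ft k (l+1)))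

lemma tp_zero_def (G : SimpleGraph V) {l : ℕ} (x : Fin l → V) :
    Ft.f0 (tp G 0 x) = fun i j => (decide (x i = x j), decide (G.Adj (x i) (x j))) := rfl

lemma tp_succ_def (G : SimpleGraph V) {k l : ℕ} (x : Fin l → V) :
    Ft.fs (tp G (k+1) x) = Finset.univ.image (fun v : V => tp G k (Fin.snoc x v)) := rfl

lemma mem_tp_succ {G : SimpleGraph V} {k l : ℕ} (x : Fin l → V) (t : Ft k (l+1)) :
    t ∈ Ft.fs (tp G (k+1) x) ↔ ∃ v : V, tp G k (Fin.snoc x v) = t := by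
  rw [tp_succ_def]
  simp

lemma tp_zero_of_tp {G : SimpleGraph V} :
    ∀ (k : ℕ) {l : ℕ} (x y : Fin l → V), tp G k x = tp G k y → tp G 0 x = tp G 0 y := by
  intro k
  induction k with
  | zero => intro l x y h; exact h
  | succ k ih =>
    intro l x y h
    obtain ⟨v⟩ : Nonempty V := inferInstance
    have hmem : tp G k (Fin.snoc x v) ∈ Ft.fs (tp G (k+1) x) :=
      (mem_tp_succ x _).mpr ⟨v, rfl⟩
    rw [h] at hmem
    obtain ⟨w, hw⟩ := (mem_tp_succ y _).mp hmem
    have h0 : tp G 0 (Fin.snoc y w) = tp G 0 (Fin.snoc x v) := ih _ _ hw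
    have h0' : Ft.f0 (tp G 0 (Fin.snoc y w)) = Ft.f0 (tp G 0 (Fin.snoc x v)) := by rw [h0]
    rw [tp_zero_def, tp_zero_def] at h0'
    show (tp G 0 x : Ft 0 l) = tp G 0 y
    have : Ft.f0 (tp G 0 x) = Ft.f0 (tp G 0 y) := by
      rw [tp_zero_def, tp_zero_def]
      funext a b
      have h1 := congrFun (congrFun h0' a.castSucc) b.castSucc
      simp only [Fin.snoc_castSucc] at h1
      exact h1.symm
    exact this

lemma tp_zero_iff {G : SimpleGraph V} {l : ℕ} {x y : Fin l → V}
    (h : tp G 0 x = tp G 0 y) (a b : Fin l) :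
    (x a = x b ↔ y a = y b) ∧ (G.Adj (x a) (x b) ↔ G.Adj (y a) (y b)) := by
  have h' : Ft.f0 (tp G 0 x) = Ft.f0 (tp G 0 y) := by rw [h]
  rw [tp_zero_def, tp_zero_def] at h'
  have h1 := congrFun (congrFun h' a) b
  rw [Prod.mk.injEq] at h1
  exact ⟨decide_eq_decide.mp h1.1, decide_eq_decide.mp h1.2⟩

/-- Canonical witness realizing a given extension type over `y`, if one exists. -/
noncomputable def witT (G : SimpleGraph V) (k : ℕ) {j : ℕ} (y : Fin j → V) (T : Ft k (j+1)) : V :=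
  if h : ∃ w : V, tp G k (Fin.snoc y w) = T then h.choose else Classical.arbitrary V

/-- Witness set for all tuples in `B` of length `j`. -/
noncomputable def Ej (G : SimpleGraph V) (D j : ℕ) (B : Finset V) : Finset V :=
  Finset.image (fun p : ((Fin j → {x // x ∈ B}) × Ft (D - j - 1) (j+1)) =>
      witT G (D - j - 1) (fun i => (p.1 i : V)) p.2) Finset.univ

/-- The staged closure sets. -/
noncomputable def Ast (G : SimpleGraph V) (D : ℕ) : ℕ → Finset V
  | 0 => ∅
  | j+1 => Ast G D j ∪ Ej G D j (Ast G D j)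

lemma Ast_mono_succ {G : SimpleGraph V} {D : ℕ} (j : ℕ) : Ast G D j ⊆ Ast G D (j+1) := by
  show Ast G D j ⊆ Ast G D j ∪ _
  exact Finset.subset_union_left

lemma Ast_mono {G : SimpleGraph V} {D : ℕ} {j j' : ℕ} (h : j ≤ j') : Ast G D j ⊆ Ast G D j' := by
  induction h with
  | refl => exact subset_rfl
  | step _ ih => exact ih.trans (Ast_mono_succ _)

lemma Ast_closure {G : SimpleGraph V} {D j : ℕ} (hj : j < D) (y : Fin j → V)
    (hy : ∀ i, y i ∈ Ast G D j) (v : V) :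
    ∃ w, w ∈ Ast G D (j+1) ∧
      tp G (D - (j+1)) (Fin.snoc y w) = tp G (D - (j+1)) (Fin.snoc y v) := by
  have hex : ∃ w : V, tp G (D - j - 1) (Fin.snoc y w) = tp G (D - j - 1) (Fin.snoc y v) :=
    ⟨v, rfl⟩
  refine ⟨witT G (D - j - 1) y (tp G (D - j - 1) (Fin.snoc y v)), ?_, ?_⟩
  · refine Finset.mem_union_right _ ?_
    refine Finset.mem_image.mpr ?_
    exact ⟨(fun i => ⟨y i, hy i⟩, tp G (D - j - 1) (Fin.snoc y v)), Finset.mem_univ _, rfl⟩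
  · show tp G (D - j - 1) _ = tp G (D - j - 1) _
    unfold witT
    rw [dif_pos hex]
    exact hex.choose_spec

lemma card_Ej_le {G : SimpleGraph V} {D j : ℕ} (B : Finset V) :
    (Ej G D j B).card ≤ B.card ^ j * Fintype.card (Ft (D - j - 1) (j+1)) := by
  refine le_trans (Finset.card_image_le) ?_
  rw [Finset.card_univ, Fintype.card_prod, Fintype.card_fun]
  simp [Fintype.card_coe]

lemma Ej_nonempty {G : SimpleGraph V} {D : ℕ} : (Ej G D 0 (∅ : Finset V)).Nonempty := by
  apply Finset.Nonempty.image
  apply Finset.univ_nonempty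

lemma Ast_one_nonempty {G : SimpleGraph V} {D : ℕ} : (Ast G D 1).Nonempty := by
  refine (Ej_nonempty (G := G) (D := D)).mono ?_
  show Ej G D 0 ∅ ⊆ Ast G D 0 ∪ Ej G D 0 (Ast G D 0)
  exact Finset.subset_union_right

/-- The base of the tower bounding the stage sizes. -/
def bnd (D j : ℕ) : ℕ := 2 * D^2 * (j+1) + j^2 + 2*j

lemma card_Ast_le {G : SimpleGraph V} {D : ℕ} (hD : 1 ≤ D) :
    ∀ j, j ≤ D → (Ast G D j).card ≤ tow D (bnd D j) := by
  intro j
  induction j with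
  | zero =>
    intro _
    show (∅ : Finset V).card ≤ _
    simp
  | succ j ih =>
    intro hjD
    have hj : j < D := by omega
    have hCle : Fintype.card (Ft (D - j - 1) (j+1)) ≤ tow D (2 * D^2) := by
      have h1 := Ft.card_le (D - j - 1) (j+1)
      have he1 : D - j - 1 + 1 = D - j := by omega
      have he2 : (D - j - 1) + (j + 1) = D := by omega
      rw [he1, he2] at h1
      calc Fintype.card (Ft (D - j - 1) (j+1)) ≤ tow (D - j) (2 * (D * D)) := h1
        _ ≤ tow D (2 * (D * D)) := tow_le_tow_k _ (by omega)
        _ = tow D (2 * D^2) := by ring_nf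
    have hCpos : 1 ≤ Fintype.card (Ft (D - j - 1) (j+1)) := Fintype.card_pos
    have hcard : (Ast G D (j+1)).card ≤
        (Ast G D j).card + (Ast G D j).card ^ j * Fintype.card (Ft (D - j - 1) (j+1)) := by
      calc (Ast G D (j+1)).card ≤ (Ast G D j).card + (Ej G D j (Ast G D j)).card :=
            Finset.card_union_le _ _
        _ ≤ _ := by
            have := card_Ej_le (G := G) (D := D) (j := j) (Ast G D j)
            omega
    rcases Nat.eq_zero_or_pos j with rfl | hj1
    · -- first stage
      have h0 : (Ast G D 0).card = 0 := by simp [Ast]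
      rw [h0] at hcard
      simp at hcard
      calc (Ast G D 1).card ≤ Fintype.card (Ft (D - 1) 1) := hcard
        _ ≤ tow D (2 * D^2) := by simpa using hCle
        _ ≤ tow D (bnd D 1) := tow_mono (by simp [bnd]; nlinarith [sq_nonneg D])
    · -- later stages, D ≥ 2
      have hD2 : 2 ≤ D := by omega
      have hX := ih (by omega)
      set X := tow D (bnd D j) with hXdef
      have hX1 : 1 ≤ X := tow_pos _ _ (by simp [bnd]; nlinarith [sq_nonneg D, hD])
      have hbl : 1 ≤ bnd D j := by simp [bnd]; nlinarith [hD]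
      have hstep : (Ast G D (j+1)).card ≤ 2 * (X ^ j * tow D (2 * D^2)) := by
        have hpow : (Ast G D j).card ^ j ≤ X ^ j := Nat.pow_le_pow_left hX j
        have hXle : (Ast G D j).card ≤ X ^ j * Fintype.card (Ft (D - j - 1) (j+1)) := by
          calc (Ast G D j).card ≤ X := hX
            _ ≤ X ^ j := Nat.le_self_pow (by omega) X
            _ ≤ X ^ j * Fintype.card (Ft (D - j - 1) (j+1)) := Nat.le_mul_of_pos_right _ hCpos
        have hmul : (Ast G D j).card ^ j * Fintype.card (Ft (D - j - 1) (j+1))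
            ≤ X ^ j * tow D (2 * D^2) :=
          Nat.mul_le_mul hpow hCle
        have hmul2 : X ^ j * Fintype.card (Ft (D - j - 1) (j+1)) ≤ X ^ j * tow D (2 * D^2) :=
          Nat.mul_le_mul_left _ hCle
        omega
      have hfin : 2 * (X ^ j * tow D (2 * D^2)) ≤ tow D (bnd D (j+1)) := by
        have h1 : X ^ j ≤ tow D (bnd D j + j) := tow_pow_le D (bnd D j) j hD2 hbl
        have h2 : X ^ j * tow D (2 * D^2) ≤ tow D (bnd D j + j + 2 * D^2) := by
          calc X ^ j * tow D (2 * D^2) ≤ tow D (bnd D j + j) * tow D (2 * D^2) :=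
                Nat.mul_le_mul_right _ h1
            _ ≤ tow D ((bnd D j + j) + 2 * D^2) :=
                tow_mul_tow_le D _ _ (by omega) (by omega) (by nlinarith [hD])
        have h3 : 2 * (X ^ j * tow D (2 * D^2)) ≤ 2 * tow D (bnd D j + j + 2 * D^2) := by omega
        calc 2 * (X ^ j * tow D (2 * D^2)) ≤ 2 * tow D (bnd D j + j + 2 * D^2) := h3
          _ ≤ tow D ((bnd D j + j + 2 * D^2) + 2) := tow_cmul_le D _ 2 (by omega)
          _ ≤ tow D (bnd D (j+1)) := tow_mono (by simp [bnd]; nlinarith)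
      omega

lemma bnd_DD (D : ℕ) : bnd D D = 2*D^3 + 3*D^2 + 2*D := by simp [bnd]; ring

end Types



section Transfer

variable {V : Type} [Fintype V] [Nonempty V]

attribute [local instance] Classical.propDecidable

lemma transfer_ex {G : SimpleGraph V} {D : ℕ} :
    ∀ (φ : Fml), ConstQ true φ → φ.NegAtomic →
    ∀ (j : ℕ), φ.depth + j ≤ D →
    ∀ (x y : Fin j → V), (∀ i, y i ∈ Ast G D j) →
      tp G (D - j) x = tp G (D - j) y →
    ∀ (σ : ℕ → V) (τ : ℕ → (↑(Ast G D D) : Set V)),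
      (∀ a ∈ φ.freeVars, ∃ b : Fin j, σ a = x b ∧ (τ a : V) = y b) →
      Fml.eval G.Adj σ φ → Fml.eval (G.induce ↑(Ast G D D)).Adj τ φ := by
  intro φ
  induction φ with
  | eq m n =>
    intro _ _ j hdj x y hy htp σ τ hf hev
    obtain ⟨p, hp1, hp2⟩ := hf m (by simp [Fml.freeVars])
    obtain ⟨q, hq1, hq2⟩ := hf n (by simp [Fml.freeVars])
    have h0 := tp_zero_of_tp (G := G) (D - j) x y htp
    have hiff := (tp_zero_iff h0 p q).1
    show τ m = τ n
    have hxy : x p = x q := by rw [← hp1, ← hq1]; exact hev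
    exact Subtype.ext (by rw [hp2, hq2]; exact hiff.mp hxy)
  | rel m n =>
    intro _ _ j hdj x y hy htp σ τ hf hev
    obtain ⟨p, hp1, hp2⟩ := hf m (by simp [Fml.freeVars])
    obtain ⟨q, hq1, hq2⟩ := hf n (by simp [Fml.freeVars])
    have h0 := tp_zero_of_tp (G := G) (D - j) x y htp
    have hiff := (tp_zero_iff h0 p q).2
    show (G.induce ↑(Ast G D D)).Adj (τ m) (τ n)
    rw [SimpleGraph.comap_adj]
    show G.Adj (τ m : V) (τ n : V)
    rw [hp2, hq2]
    refine hiff.mp ?_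
    rw [← hp1, ← hq1]; exact hev
  | not ψ ih =>
    intro hcq hNA j hdj x y hy htp σ τ hf hev
    have h0 := tp_zero_of_tp (G := G) (D - j) x y htp
    cases ψ with
    | eq m n =>
      obtain ⟨p, hp1, hp2⟩ := hf m (by simp [Fml.freeVars])
      obtain ⟨q, hq1, hq2⟩ := hf n (by simp [Fml.freeVars])
      have hiff := (tp_zero_iff h0 p q).1
      intro hcon
      apply hev
      show σ m = σ n
      have : (τ m : V) = (τ n : V) := congrArg _ hcon
      rw [hp2, hq2] at this
      rw [hp1, hq1]
      exact hiff.mpr this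
    | rel m n =>
      obtain ⟨p, hp1, hp2⟩ := hf m (by simp [Fml.freeVars])
      obtain ⟨q, hq1, hq2⟩ := hf n (by simp [Fml.freeVars])
      have hiff := (tp_zero_iff h0 p q).2
      intro hcon
      apply hev
      show G.Adj (σ m) (σ n)
      have hcon' : G.Adj (τ m : V) (τ n : V) := hcon
      have : G.Adj (y p) (y q) := by rw [← hp2, ← hq2]; exact hcon'
      rw [hp1, hq1]
      exact hiff.mpr this
    | not ψ' => exact False.elim hNA
    | and ψ' χ' => exact False.elim hNA
    | or ψ' χ' => exact False.elim hNA
    | all i ψ' => exact False.elim hNA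
    | ex i ψ' => exact False.elim hNA
  | and ψ χ ihψ ihχ =>
    intro hcq hNA j hdj x y hy htp σ τ hf hev
    obtain ⟨h1, h2⟩ := hev
    simp only [Fml.depth] at hdj
    have hmax1 := Nat.le_max_left ψ.depth χ.depth
    have hmax2 := Nat.le_max_right ψ.depth χ.depth
    exact ⟨ihψ hcq.and_left hNA.1 j (by omega) x y hy htp σ τ
        (fun a ha => hf a (Finset.mem_union_left _ ha)) h1,
      ihχ hcq.and_right hNA.2 j (by omega) x y hy htp σ τ
        (fun a ha => hf a (Finset.mem_union_right _ ha)) h2⟩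
  | or ψ χ ihψ ihχ =>
    intro hcq hNA j hdj x y hy htp σ τ hf hev
    simp only [Fml.depth] at hdj
    have hmax1 := Nat.le_max_left ψ.depth χ.depth
    have hmax2 := Nat.le_max_right ψ.depth χ.depth
    rcases hev with h1 | h2
    · exact Or.inl (ihψ hcq.or_left hNA.1 j (by omega) x y hy htp σ τ
        (fun a ha => hf a (Finset.mem_union_left _ ha)) h1)
    · exact Or.inr (ihχ hcq.or_right hNA.2 j (by omega) x y hy htp σ τ
        (fun a ha => hf a (Finset.mem_union_right _ ha)) h2)
  | all i ψ ih =>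
    intro hcq _ _ _ _ _ _ _ _ _ _ _
    exact (hcq.no_all).elim
  | ex i ψ ih =>
    intro hcq hNA j hdj x y hy htp σ τ hf hev
    simp only [Fml.depth] at hdj
    have hdψ : ψ.depth + (j + 1) ≤ D := by omega
    have hjD : j < D := by omega
    obtain ⟨v, hv⟩ := hev
    have hE : D - j = (D - (j+1)) + 1 := by omega
    rw [hE] at htp
    have hmem : tp G (D - (j+1)) (Fin.snoc x v) ∈ Ft.fs (tp G ((D - (j+1)) + 1) x) :=
      (mem_tp_succ x _).mpr ⟨v, rfl⟩
    rw [htp] at hmem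
    obtain ⟨u, hu⟩ := (mem_tp_succ y _).mp hmem
    obtain ⟨w, hwmem, hw⟩ := Ast_closure hjD y hy u
    have hwS : w ∈ (↑(Ast G D D) : Set V) := by
      have : w ∈ Ast G D D := Ast_mono (by omega) hwmem
      simpa using this
    refine ⟨⟨w, hwS⟩, ?_⟩
    refine ih hcq.body_ex hNA (j+1) hdψ (Fin.snoc x v) (Fin.snoc y w) ?_ ?_
      (Function.update σ i v) (Function.update τ i ⟨w, hwS⟩) ?_ hv
    · intro b
      refine Fin.lastCases ?_ ?_ b
      · rw [Fin.snoc_last]; exact hwmem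
      · intro b'; rw [Fin.snoc_castSucc]; exact Ast_mono_succ _ (hy b')
    · exact (hw.trans hu).symm
    · intro a ha
      by_cases hai : a = i
      · subst hai
        refine ⟨Fin.last j, ?_, ?_⟩
        · rw [Function.update_self, Fin.snoc_last]
        · rw [Function.update_self, Fin.snoc_last]
      · obtain ⟨b, hb1, hb2⟩ := hf a (by
          show a ∈ (ψ.freeVars).erase i
          exact Finset.mem_erase.mpr ⟨hai, ha⟩)
        exact ⟨b.castSucc, by rw [Function.update_of_ne hai, Fin.snoc_castSucc]; exact hb1,
          by rw [Function.update_of_ne hai, Fin.snoc_castSucc]; exact hb2⟩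

lemma transfer_all {G : SimpleGraph V} {D : ℕ} :
    ∀ (φ : Fml), ConstQ false φ → φ.NegAtomic →
    ∀ (j : ℕ), φ.depth + j ≤ D →
    ∀ (x y : Fin j → V), (∀ i, y i ∈ Ast G D D) →
      tp G (D - j) x = tp G (D - j) y →
    ∀ (σ : ℕ → V) (τ : ℕ → (↑(Ast G D D) : Set V)),
      (∀ a ∈ φ.freeVars, ∃ b : Fin j, σ a = x b ∧ (τ a : V) = y b) →
      Fml.eval G.Adj σ φ → Fml.eval (G.induce ↑(Ast G D D)).Adj τ φ := by
  intro φ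
  induction φ with
  | eq m n =>
    intro _ _ j hdj x y hy htp σ τ hf hev
    obtain ⟨p, hp1, hp2⟩ := hf m (by simp [Fml.freeVars])
    obtain ⟨q, hq1, hq2⟩ := hf n (by simp [Fml.freeVars])
    have h0 := tp_zero_of_tp (G := G) (D - j) x y htp
    have hiff := (tp_zero_iff h0 p q).1
    show τ m = τ n
    have hxy : x p = x q := by rw [← hp1, ← hq1]; exact hev
    exact Subtype.ext (by rw [hp2, hq2]; exact hiff.mp hxy)
  | rel m n =>
    intro _ _ j hdj x y hy htp σ τ hf hev
    obtain ⟨p, hp1, hp2⟩ := hf m (by simp [Fml.freeVars])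
    obtain ⟨q, hq1, hq2⟩ := hf n (by simp [Fml.freeVars])
    have h0 := tp_zero_of_tp (G := G) (D - j) x y htp
    have hiff := (tp_zero_iff h0 p q).2
    show (G.induce ↑(Ast G D D)).Adj (τ m) (τ n)
    rw [SimpleGraph.comap_adj]
    show G.Adj (τ m : V) (τ n : V)
    rw [hp2, hq2]
    refine hiff.mp ?_
    rw [← hp1, ← hq1]; exact hev
  | not ψ ih =>
    intro hcq hNA j hdj x y hy htp σ τ hf hev
    have h0 := tp_zero_of_tp (G := G) (D - j) x y htp
    cases ψ with
    | eq m n =>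
      obtain ⟨p, hp1, hp2⟩ := hf m (by simp [Fml.freeVars])
      obtain ⟨q, hq1, hq2⟩ := hf n (by simp [Fml.freeVars])
      have hiff := (tp_zero_iff h0 p q).1
      intro hcon
      apply hev
      show σ m = σ n
      have : (τ m : V) = (τ n : V) := congrArg _ hcon
      rw [hp2, hq2] at this
      rw [hp1, hq1]
      exact hiff.mpr this
    | rel m n =>
      obtain ⟨p, hp1, hp2⟩ := hf m (by simp [Fml.freeVars])
      obtain ⟨q, hq1, hq2⟩ := hf n (by simp [Fml.freeVars])
      have hiff := (tp_zero_iff h0 p q).2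
      intro hcon
      apply hev
      show G.Adj (σ m) (σ n)
      have hcon' : G.Adj (τ m : V) (τ n : V) := hcon
      have : G.Adj (y p) (y q) := by rw [← hp2, ← hq2]; exact hcon'
      rw [hp1, hq1]
      exact hiff.mpr this
    | not ψ' => exact False.elim hNA
    | and ψ' χ' => exact False.elim hNA
    | or ψ' χ' => exact False.elim hNA
    | all i ψ' => exact False.elim hNA
    | ex i ψ' => exact False.elim hNA
  | and ψ χ ihψ ihχ =>
    intro hcq hNA j hdj x y hy htp σ τ hf hev
    obtain ⟨h1, h2⟩ := hev
    simp only [Fml.depth] at hdj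
    have hmax1 := Nat.le_max_left ψ.depth χ.depth
    have hmax2 := Nat.le_max_right ψ.depth χ.depth
    exact ⟨ihψ hcq.and_left hNA.1 j (by omega) x y hy htp σ τ
        (fun a ha => hf a (Finset.mem_union_left _ ha)) h1,
      ihχ hcq.and_right hNA.2 j (by omega) x y hy htp σ τ
        (fun a ha => hf a (Finset.mem_union_right _ ha)) h2⟩
  | or ψ χ ihψ ihχ =>
    intro hcq hNA j hdj x y hy htp σ τ hf hev
    simp only [Fml.depth] at hdj
    have hmax1 := Nat.le_max_left ψ.depth χ.depth
    have hmax2 := Nat.le_max_right ψ.depth χ.depth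
    rcases hev with h1 | h2
    · exact Or.inl (ihψ hcq.or_left hNA.1 j (by omega) x y hy htp σ τ
        (fun a ha => hf a (Finset.mem_union_left _ ha)) h1)
    · exact Or.inr (ihχ hcq.or_right hNA.2 j (by omega) x y hy htp σ τ
        (fun a ha => hf a (Finset.mem_union_right _ ha)) h2)
  | ex i ψ ih =>
    intro hcq _ _ _ _ _ _ _ _ _ _ _
    exact (hcq.no_ex).elim
  | all i ψ ih =>
    intro hcq hNA j hdj x y hy htp σ τ hf hev
    simp only [Fml.depth] at hdj
    have hdψ : ψ.depth + (j + 1) ≤ D := by omega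
    have hjD : j < D := by omega
    intro w'
    have hE : D - j = (D - (j+1)) + 1 := by omega
    rw [hE] at htp
    have hmem : tp G (D - (j+1)) (Fin.snoc y (w' : V)) ∈ Ft.fs (tp G ((D - (j+1)) + 1) y) :=
      (mem_tp_succ y _).mpr ⟨(w' : V), rfl⟩
    rw [← htp] at hmem
    obtain ⟨v, hv⟩ := (mem_tp_succ x _).mp hmem
    refine ih hcq.body_all hNA (j+1) hdψ (Fin.snoc x v) (Fin.snoc y (w' : V)) ?_ hv
      (Function.update σ i v) (Function.update τ i w') ?_ (hev v)
    · intro b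
      refine Fin.lastCases ?_ ?_ b
      · rw [Fin.snoc_last]
        have := w'.2
        simpa using this
      · intro b'; rw [Fin.snoc_castSucc]; exact hy b'
    · intro a ha
      by_cases hai : a = i
      · subst hai
        refine ⟨Fin.last j, ?_, ?_⟩
        · rw [Function.update_self, Fin.snoc_last]
        · rw [Function.update_self, Fin.snoc_last]
      · obtain ⟨b, hb1, hb2⟩ := hf a (by
          show a ∈ (ψ.freeVars).erase i
          exact Finset.mem_erase.mpr ⟨hai, ha⟩)
        exact ⟨b.castSucc, by rw [Function.update_of_ne hai, Fin.snoc_castSucc]; exact hb1,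
          by rw [Function.update_of_ne hai, Fin.snoc_castSucc]; exact hb2⟩

lemma transfer_zero {G : SimpleGraph V} {D : ℕ} :
    ∀ (φ : Fml), φ.AltLe 0 → φ.NegAtomic →
    ∀ (j : ℕ), φ.depth + j ≤ D →
    ∀ (x y : Fin j → V), (∀ i, y i ∈ Ast G D j) →
      tp G (D - j) x = tp G (D - j) y →
    ∀ (σ : ℕ → V) (τ : ℕ → (↑(Ast G D D) : Set V)),
      (∀ a ∈ φ.freeVars, ∃ b : Fin j, σ a = x b ∧ (τ a : V) = y b) →
      Fml.eval G.Adj σ φ → Fml.eval (G.induce ↑(Ast G D D)).Adj τ φ := by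
  intro φ
  induction φ with
  | eq m n =>
    intro _ _ j hdj x y hy htp σ τ hf hev
    obtain ⟨p, hp1, hp2⟩ := hf m (by simp [Fml.freeVars])
    obtain ⟨q, hq1, hq2⟩ := hf n (by simp [Fml.freeVars])
    have h0 := tp_zero_of_tp (G := G) (D - j) x y htp
    have hiff := (tp_zero_iff h0 p q).1
    show τ m = τ n
    have hxy : x p = x q := by rw [← hp1, ← hq1]; exact hev
    exact Subtype.ext (by rw [hp2, hq2]; exact hiff.mp hxy)
  | rel m n =>
    intro _ _ j hdj x y hy htp σ τ hf hev
    obtain ⟨p, hp1, hp2⟩ := hf m (by simp [Fml.freeVars])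
    obtain ⟨q, hq1, hq2⟩ := hf n (by simp [Fml.freeVars])
    have h0 := tp_zero_of_tp (G := G) (D - j) x y htp
    have hiff := (tp_zero_iff h0 p q).2
    show (G.induce ↑(Ast G D D)).Adj (τ m) (τ n)
    rw [SimpleGraph.comap_adj]
    show G.Adj (τ m : V) (τ n : V)
    rw [hp2, hq2]
    refine hiff.mp ?_
    rw [← hp1, ← hq1]; exact hev
  | not ψ ih =>
    intro hcq hNA j hdj x y hy htp σ τ hf hev
    have h0 := tp_zero_of_tp (G := G) (D - j) x y htp
    cases ψ with
    | eq m n =>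
      obtain ⟨p, hp1, hp2⟩ := hf m (by simp [Fml.freeVars])
      obtain ⟨q, hq1, hq2⟩ := hf n (by simp [Fml.freeVars])
      have hiff := (tp_zero_iff h0 p q).1
      intro hcon
      apply hev
      show σ m = σ n
      have : (τ m : V) = (τ n : V) := congrArg _ hcon
      rw [hp2, hq2] at this
      rw [hp1, hq1]
      exact hiff.mpr this
    | rel m n =>
      obtain ⟨p, hp1, hp2⟩ := hf m (by simp [Fml.freeVars])
      obtain ⟨q, hq1, hq2⟩ := hf n (by simp [Fml.freeVars])
      have hiff := (tp_zero_iff h0 p q).2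
      intro hcon
      apply hev
      show G.Adj (σ m) (σ n)
      have hcon' : G.Adj (τ m : V) (τ n : V) := hcon
      have : G.Adj (y p) (y q) := by rw [← hp2, ← hq2]; exact hcon'
      rw [hp1, hq1]
      exact hiff.mpr this
    | not ψ' => exact False.elim hNA
    | and ψ' χ' => exact False.elim hNA
    | or ψ' χ' => exact False.elim hNA
    | all i ψ' => exact False.elim hNA
    | ex i ψ' => exact False.elim hNA
  | and ψ χ ihψ ihχ =>
    intro hcq hNA j hdj x y hy htp σ τ hf hev
    obtain ⟨h1, h2⟩ := hev
    simp only [Fml.depth] at hdj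
    have hmax1 := Nat.le_max_left ψ.depth χ.depth
    have hmax2 := Nat.le_max_right ψ.depth χ.depth
    exact ⟨ihψ hcq.zero_and_left hNA.1 j (by omega) x y hy htp σ τ
        (fun a ha => hf a (Finset.mem_union_left _ ha)) h1,
      ihχ hcq.zero_and_right hNA.2 j (by omega) x y hy htp σ τ
        (fun a ha => hf a (Finset.mem_union_right _ ha)) h2⟩
  | or ψ χ ihψ ihχ =>
    intro hcq hNA j hdj x y hy htp σ τ hf hev
    simp only [Fml.depth] at hdj
    have hmax1 := Nat.le_max_left ψ.depth χ.depth
    have hmax2 := Nat.le_max_right ψ.depth χ.depth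
    rcases hev with h1 | h2
    · exact Or.inl (ihψ hcq.zero_or_left hNA.1 j (by omega) x y hy htp σ τ
        (fun a ha => hf a (Finset.mem_union_left _ ha)) h1)
    · exact Or.inr (ihχ hcq.zero_or_right hNA.2 j (by omega) x y hy htp σ τ
        (fun a ha => hf a (Finset.mem_union_right _ ha)) h2)
  | ex i ψ ih =>
    intro hcq hNA j hdj x y hy htp σ τ hf hev
    exact transfer_ex (Fml.ex i ψ) (constQ_of_altLe_ex hcq) hNA j hdj x y hy htp σ τ hf hev
  | all i ψ ih =>
    intro hcq hNA j hdj x y hy htp σ τ hf hev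
    have hjD : j ≤ D := by simp only [Fml.depth] at hdj; omega
    exact transfer_all (Fml.all i ψ) (constQ_of_altLe_all hcq) hNA j hdj x y
      (fun b => Ast_mono hjD (hy b)) htp σ τ hf hev

end Transfer

theorem statement_1 {V : Type} [Fintype V] [Nonempty V] (G : SimpleGraph V)
    (φ : Fml) (hφ : φ.ZeroAlt) (hdef : Defines G φ) :
    logStar (Fintype.card V) ≤ φ.depth + logStar (logStar (Fintype.card V)) + 1 := by
  classical
  by_contra hcon
  push_neg at hcon
  have hD1 : 1 ≤ φ.depth := one_le_depth_of_sentence hdef.1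
  set n := Fintype.card V with hn
  set D := φ.depth with hD
  have hcon' : D + logStar (logStar n) + 2 ≤ logStar n := by omega
  have hA1 : 1 ≤ logStar (logStar n) := by
    have h3 : (3:ℕ) ≤ logStar n := by omega
    have := logStar_mono h3
    rw [logStar_three] at this
    omega
  have hA2 : 2 ≤ logStar (logStar n) := by
    have h4 : (4:ℕ) ≤ logStar n := by omega
    have := logStar_mono h4
    rw [logStar_four] at this
    omega
  have hAD : logStar (D + 4) ≤ logStar (logStar n) := by
    have h1 : D + 4 ≤ logStar n := by omega
    exact logStar_mono h1
  have hbnd : bnd D D ≤ 2 ^ (D + 4) := by rw [bnd_DD]; exact bnd_poly D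
  have hlogtow : logStar (tow D (bnd D D)) ≤ D + logStar (logStar n) + 1 := by
    have h1 : logStar (tow D (bnd D D)) ≤ D + logStar (bnd D D) := logStar_tow _ _
    have h2 : logStar (bnd D D) ≤ logStar (D + 4) + 1 := logStar_le_of_le_two_pow hbnd
    omega
  have hnn : tow D (bnd D D) < n := by
    by_contra hle
    push_neg at hle
    have := logStar_mono hle
    omega
  have hcard : (Ast G D D).card ≤ tow D (bnd D D) := card_Ast_le hD1 D le_rfl
  have hcardn : (Ast G D D).card < n := lt_of_le_of_lt hcard hnn
  have hSne : (Ast G D D).Nonempty := Ast_one_nonempty.mono (Ast_mono hD1)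
  letI instFT : Fintype (↑((Ast G D D) : Set V) : Type) := (Ast G D D).finite_toSet.fintype
  have instNE : Nonempty (↑((Ast G D D) : Set V) : Type) :=
    ⟨⟨hSne.choose, by simpa using hSne.choose_spec⟩⟩
  have hGM : GModels (G.induce ↑((Ast G D D) : Set V)) φ := by
    intro τ
    have hev : Fml.eval G.Adj (fun _ => Classical.arbitrary V) φ := hdef.2.1 _
    refine transfer_zero φ hφ.2 hφ.1 0 (by omega) (Fin.elim0) (Fin.elim0)
      (fun i => i.elim0) rfl _ τ ?_ hev
    intro a ha
    rw [hdef.1] at ha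
    simp at ha
  have hniso : ¬ Nonempty (G ≃g (G.induce ↑((Ast G D D) : Set V))) := by
    rintro ⟨e⟩
    have hc : Fintype.card V = Fintype.card (↑((Ast G D D) : Set V) : Type) :=
      Fintype.card_congr e.toEquiv
    have hc2 : Fintype.card (↑((Ast G D D) : Set V) : Type) = (Ast G D D).card := by
      rw [← Fintype.card_coe (Ast G D D)]
      exact Fintype.card_congr (Equiv.subtypeEquivRight (fun x => by simp))
    rw [hc2] at hc
    omega
  exact hdef.2.2 _ instFT instNE _ hniso hGM

end PaperFO
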